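/- Let C be a C*-algebra and let ℋ ⊆ C be a *-subalgebra (not necessarily closed) which equals the linear span of ℋ⁺ := ℋ ∩ C⁺ and such that ℋ⁺ is a hereditary cone in C: whenever c ∈ C and h ∈ ℋ⁺ with 0 ≤ c ≤ h, then c ∈ ℋ. Then: (i) h₁ c h₂ ∈ ℋ for all h₁, h₂ ∈ ℋ and c ∈ C; (ii) if D denotes the closure in C of the linear span of {h₁ c h₂ : h₁, h₂ ∈ ℋ, c ∈ C}, then the set (span ℋCℋ) ∩ C⁺ is dense in D ∩ C⁺; and (iii) the norm closure of ℋ in C is a hereditary C*-subalgebra of C, i.e., a closed *-subalgebra B such that c ∈ C, b ∈ B and 0 ≤ c ≤ b imply c ∈ B. -/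

import Mathlib

section Aux


variable {C : Type*} [NonUnitalCStarAlgebra C] [PartialOrder C] [StarOrderedRing C]

lemma conj_mem (H : NonUnitalStarSubalgebra ℂ C)
    (hher : ∀ c h : C, h ∈ H → 0 ≤ c → c ≤ h → c ∈ H)
    {a : C} (ha : a ∈ H) (c : C) : star a * c * a ∈ H := by
  have key : ∀ c : C, 0 ≤ c → star a * c * a ∈ H := by
    intro c hc
    refine hher _ ((‖c‖ : ℂ) • (star a * a))
      ((SMulMemClass.smul_mem _ (mul_mem (star_mem ha) ha))) (star_left_conjugate_nonneg hc a) ?_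
    have h2 : (‖c‖ : ℂ) • (star a * a) = (‖c‖ : ℝ) • (star a * a) := by
      simp [Complex.coe_smul]
    rw [h2]
    exact CStarAlgebra.star_left_conjugate_le_norm_smul (IsSelfAdjoint.of_nonneg hc)
  have hc : c ∈ Submodule.span ℂ {x : C | 0 ≤ x} := by
    rw [CStarAlgebra.span_nonneg]; trivial
  induction hc using Submodule.span_induction with
  | mem x hx => exact key x hx
  | zero => simpa using zero_mem H
  | add x y _ _ hx hy => simpa [mul_add, add_mul] using add_mem hx hy
  | smul z x _ hx => simpa [mul_smul_comm, smul_mul_assoc] using SMulMemClass.smul_mem z hx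

lemma hmul_mem (H : NonUnitalStarSubalgebra ℂ C)
    (hher : ∀ c h : C, h ∈ H → 0 ≤ c → c ≤ h → c ∈ H)
    {h₁ h₂ : C} (H1 : h₁ ∈ H) (H2 : h₂ ∈ H) (c : C) : h₁ * c * h₂ ∈ H := by
  have T : ∀ z : ℂ, star (h₂ + z • star h₁) * c * (h₂ + z • star h₁) ∈ H := fun z =>
    conj_mem H hher (add_mem H2 (SMulMemClass.smul_mem z (star_mem H1))) c
  have key : h₁ * c * h₂ = (4:ℂ)⁻¹ •
      ((star (h₂ + (1:ℂ) • star h₁) * c * (h₂ + (1:ℂ) • star h₁))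
      + Complex.I • (star (h₂ + Complex.I • star h₁) * c * (h₂ + Complex.I • star h₁))
      - (star (h₂ + (-1:ℂ) • star h₁) * c * (h₂ + (-1:ℂ) • star h₁))
      - Complex.I • (star (h₂ + (-Complex.I) • star h₁) * c * (h₂ + (-Complex.I) • star h₁))) := by
    simp only [star_add, star_neg, star_smul, RCLike.star_def, Complex.conj_I, map_one, map_neg, star_star,
      mul_add, add_mul, smul_mul_assoc, mul_smul_comm, smul_smul, smul_add, smul_sub, one_smul,
      neg_smul, neg_neg, neg_mul, mul_neg, Complex.I_mul_I, mul_assoc]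
    match_scalars <;> simp [Complex.ext_iff] <;> norm_num
  rw [key]
  exact SMulMemClass.smul_mem _ (sub_mem (sub_mem (add_mem (T 1)
    (SMulMemClass.smul_mem _ (T Complex.I))) (T (-1))) (SMulMemClass.smul_mem _ (T (-Complex.I))))

lemma cfc_mem_closure (H : NonUnitalStarSubalgebra ℂ C) {b : C} (hb : b ∈ closure (H : Set C))
    (hbsa : IsSelfAdjoint b) (f : ℝ → ℝ) (hf : ContinuousOn f (quasispectrum ℝ b))
    (hf0 : f 0 = 0) : cfcₙ f b ∈ closure (H : Set C) := by
  let B := H.topologicalClosure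
  have hBc : closure (H : Set C) = (B : Set C) := rfl
  let K : NonUnitalStarSubalgebra ℝ C :=
    { carrier := closure (H : Set C)
      add_mem' := fun hx hy => B.add_mem' hx hy
      mul_mem' := fun hx hy => B.mul_mem' hx hy
      zero_mem' := B.zero_mem'
      star_mem' := fun hx => B.star_mem' hx
      smul_mem' := fun r x hx => by
        have : r • x = (r : ℂ) • x := (Complex.coe_smul r x).symm
        rw [this]
        exact B.smul_mem' (r : ℂ) hx }
  suffices h : cfcₙ f b ∈ K from h
  have hb' : b ∈ K := hb
  have hdense := ContinuousMapZero.adjoin_id_dense (quasispectrum ℝ b)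
  set φ : ContinuousMapZero (quasispectrum ℝ b) ℝ →⋆ₙₐ[ℝ] C := cfcₙHom hbsa with hφ
  have hφcont : Continuous φ := cfcₙHom_continuous hbsa
  have hall : ∀ g : ContinuousMapZero (quasispectrum ℝ b) ℝ, φ g ∈ K := by
    intro g
    have hle : NonUnitalStarAlgebra.adjoin ℝ {(ContinuousMapZero.id (quasispectrum ℝ b) :
        ContinuousMapZero (quasispectrum ℝ b) ℝ)} ≤ NonUnitalStarSubalgebra.comap φ K := by
      apply NonUnitalStarAlgebra.adjoin_le
      intro x hx
      rw [Set.mem_singleton_iff] at hx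
      subst hx
      show φ _ ∈ K
      have hid : φ (ContinuousMapZero.id (quasispectrum ℝ b)) = b := cfcₙHom_id hbsa
      rw [hid]
      exact hb'
    have hclosed : IsClosed (φ ⁻¹' (K : Set C)) := isClosed_closure.preimage hφcont
    have hmem : g ∈ closure (NonUnitalStarAlgebra.adjoin ℝ
        {(ContinuousMapZero.id (quasispectrum ℝ b) : ContinuousMapZero (quasispectrum ℝ b) ℝ)} : Set _) := by
      rw [hdense.closure_eq]; trivial
    exact closure_minimal (fun x hx => hle hx) hclosed hmem
  rw [cfcₙ_apply f b hf hf0 hbsa]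
  exact hall _

local notation "U" => Unitization ℂ C

lemma sq_le_norm_smul' {a : U} (ha : 0 ≤ a) : a * a ≤ ‖a‖ • a := by
  conv_lhs => rw [← cfc_id ℝ a, ← cfc_mul ..]
  have h1 : ‖a‖ • a = cfc (fun t : ℝ => ‖a‖ * t) a := (cfc_const_mul_id _ a).symm
  rw [h1]
  refine cfc_mono fun x hx => ?_
  have hx0 : 0 ≤ x := spectrum_nonneg_of_nonneg ha hx
  have : x ≤ ‖a‖ := by
    simpa [Real.norm_of_nonneg hx0] using spectrum.norm_le_norm_of_mem hx
  simpa [id] using mul_le_mul_of_nonneg_right this hx0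

lemma key_est (c b : C) (hc : 0 ≤ c) (hcb : c ≤ b) {δ : ℝ} (hδ : 0 < δ) :
    ‖c - cfcₙ (fun t : ℝ => t / (t + δ)) b * c * cfcₙ (fun t : ℝ => t / (t + δ)) b‖ ≤
      2 * Real.sqrt (‖c‖ * δ) + δ := by
  have hb : 0 ≤ b := hc.trans hcb
  have hbsa : IsSelfAdjoint b := .of_nonneg hb
  have hσ : ∀ x ∈ quasispectrum ℝ b, 0 ≤ x := fun x hx =>
    quasispectrum_nonneg_of_nonneg b hb x hx
  set f : ℝ → ℝ := fun t => t / (t + δ) with hf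
  have hfc : ContinuousOn f (quasispectrum ℝ b) := by
    apply ContinuousOn.div continuousOn_id (by fun_prop)
    intro x hx
    have := hσ x hx
    positivity
  have hf0 : f 0 = 0 := by simp [hf]
  set g : C := cfcₙ f b with hg
  have hgsa : IsSelfAdjoint g := cfcₙ_predicate f b
  -- the function algebra computation
  have hid : ContinuousOn (fun t : ℝ => t) (quasispectrum ℝ b) := continuousOn_id
  have h3 : ContinuousOn (fun t : ℝ => t * f t) (quasispectrum ℝ b) := hid.mul hfc
  have e1 : cfcₙ (fun t : ℝ => f t * t) b = g * b := by
    rw [cfcₙ_mul f (fun t => t) b hfc hf0 hid rfl, cfcₙ_id' ℝ b]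
  have e2 : cfcₙ (fun t : ℝ => t * f t) b = b * g := by
    rw [cfcₙ_mul (fun t : ℝ => t) f b hid rfl hfc hf0, cfcₙ_id' ℝ b]
  have e3 : cfcₙ (fun t : ℝ => f t * (t * f t)) b = g * (b * g) := by
    rw [cfcₙ_mul f (fun t : ℝ => t * f t) b hfc hf0 h3 (by simpa using hf0), e2]
  have e4 : cfcₙ (fun t : ℝ => t - f t * t) b = b - g * b := by
    rw [cfcₙ_sub (fun t : ℝ => t) (fun t => f t * t) b hid rfl (hfc.mul hid)
      (by simpa using hf0), cfcₙ_id' ℝ b, e1]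
  have e5 : cfcₙ (fun t : ℝ => t - f t * t - t * f t) b = b - g * b - b * g := by
    rw [cfcₙ_sub (fun t : ℝ => t - f t * t) (fun t => t * f t) b (hid.sub (hfc.mul hid))
      (by simpa using hf0) h3 (by simpa using hf0), e4, e2]
  have hq : b - g * b - b * g + g * (b * g) =
      cfcₙ (fun t : ℝ => t - f t * t - t * f t + f t * (t * f t)) b := by
    rw [cfcₙ_add (fun t : ℝ => t - f t * t - t * f t) (fun t => f t * (t * f t)) b
      ((hid.sub (hfc.mul hid)).sub h3) (by simpa using hf0) (hfc.mul h3)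
      (by simpa using hf0), e5, e3]
  have hqn : ‖b - g * b - b * g + g * (b * g)‖ ≤ δ := by
    rw [hq]
    refine norm_cfcₙ_le fun x hx => ?_
    have hx0 : 0 ≤ x := hσ x hx
    have hxδ : 0 < x + δ := by positivity
    have hval : x - f x * x - x * f x + f x * (x * f x) = x * δ ^ 2 / (x + δ) ^ 2 := by
      simp only [hf]
      field_simp
      ring
    rw [hval, Real.norm_of_nonneg (by positivity)]
    rw [div_le_iff₀ (by positivity)]
    nlinarith [sq_nonneg x, sq_nonneg (x - δ), mul_nonneg hx0 hδ.le]
  -- move to the unitization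
  set c' : U := (c : U) with hc'
  set b' : U := (b : U) with hb'
  set E : U := 1 - (g : U) with hE
  have hEsa : IsSelfAdjoint E := by
    rw [hE]
    exact IsSelfAdjoint.sub (IsSelfAdjoint.one _) (hgsa.inr ℂ)
  have hEbE : E * b' * E = ((b - g * b - b * g + g * (b * g) : C) : U) := by
    have : ((b - g * b - b * g + g * (b * g) : C) : U) =
        b' - (g : U) * b' - b' * (g : U) + (g : U) * (b' * (g : U)) := by
      simp only [Unitization.inr_sub, Unitization.inr_add, Unitization.inr_mul, hb']
    rw [this, hE]
    noncomm_ring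
  have hEcE : E * c' * E = ((c - g * c - c * g + g * (c * g) : C) : U) := by
    have : ((c - g * c - c * g + g * (c * g) : C) : U) =
        c' - (g : U) * c' - c' * (g : U) + (g : U) * (c' * (g : U)) := by
      simp only [Unitization.inr_sub, Unitization.inr_add, Unitization.inr_mul, hc']
    rw [this, hE]
    noncomm_ring
  have hcb' : c' ≤ b' := by
    rw [hc', hb']
    exact (Unitization.inr_le_iff c b hc.isSelfAdjoint hb.isSelfAdjoint).mpr hcb
  have hc0' : 0 ≤ c' := Unitization.inr_nonneg_iff.mpr hc
  have hEcE_nonneg : 0 ≤ E * c' * E := by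
    have := star_left_conjugate_nonneg hc0' E
    rwa [hEsa.star_eq] at this
  have hEcE_le : E * c' * E ≤ E * b' * E := by
    have := star_left_conjugate_le_conjugate hcb' E
    rwa [hEsa.star_eq] at this
  have hnormEbE : ‖E * b' * E‖ ≤ δ := by
    rw [hEbE, Unitization.norm_inr]
    exact hqn
  have hnormEcE : ‖E * c' * E‖ ≤ δ :=
    (CStarAlgebra.norm_le_norm_of_nonneg_of_le hEcE_nonneg hEcE_le).trans hnormEbE
  -- bound ‖c' * E‖
  have hcsa' : IsSelfAdjoint c' := hc.isSelfAdjoint.inr ℂ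
  have hsq : c' * c' ≤ ‖c‖ • c' := by
    have := sq_le_norm_smul' hc0'
    rwa [hc', Unitization.norm_inr] at this
  have hconj2 : E * (c' * c') * E ≤ ‖c‖ • (E * c' * E) := by
    have := star_left_conjugate_le_conjugate hsq E
    rwa [hEsa.star_eq, mul_smul_comm, smul_mul_assoc] at this
  have hconj2_nonneg : 0 ≤ E * (c' * c') * E := by
    have h2 : 0 ≤ c' * c' := by
      have := star_mul_self_nonneg c'
      rwa [hcsa'.star_eq] at this
    have := star_left_conjugate_nonneg h2 E
    rwa [hEsa.star_eq] at this
  have hcE : ‖c' * E‖ ^ 2 ≤ ‖c‖ * δ := by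
    have h1 : ‖c' * E‖ ^ 2 = ‖star (c' * E) * (c' * E)‖ := by
      rw [CStarRing.norm_star_mul_self, sq]
    have h2 : star (c' * E) * (c' * E) = E * (c' * c') * E := by
      rw [star_mul, hEsa.star_eq, hcsa'.star_eq]
      noncomm_ring
    rw [h1, h2]
    calc ‖E * (c' * c') * E‖ ≤ ‖(‖c‖ : ℝ) • (E * c' * E)‖ :=
          CStarAlgebra.norm_le_norm_of_nonneg_of_le hconj2_nonneg hconj2
      _ = ‖c‖ * ‖E * c' * E‖ := by
          rw [norm_smul, Real.norm_of_nonneg (norm_nonneg c)]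
      _ ≤ ‖c‖ * δ := by
          exact mul_le_mul_of_nonneg_left hnormEcE (norm_nonneg c)
  have hcE' : ‖c' * E‖ ≤ Real.sqrt (‖c‖ * δ) := by
    rw [← Real.sqrt_sq (norm_nonneg (c' * E))]
    exact Real.sqrt_le_sqrt hcE
  have hEc' : ‖E * c'‖ ≤ Real.sqrt (‖c‖ * δ) := by
    have : E * c' = star (c' * E) := by rw [star_mul, hEsa.star_eq, hcsa'.star_eq]
    rw [this, norm_star]
    exact hcE'
  -- final assembly
  have hfinal : ((c - g * c * g : C) : U) = E * c' + c' * E - E * c' * E := by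
    have h1 : ((c - g * c * g : C) : U) = c' - (g : U) * c' * (g : U) := by
      simp only [Unitization.inr_sub, Unitization.inr_mul, hc']
    have hgE : (g : U) = 1 - E := by rw [hE, sub_sub_cancel]
    rw [h1, hgE]
    noncomm_ring
  calc ‖c - g * c * g‖ = ‖((c - g * c * g : C) : U)‖ := (Unitization.norm_inr _).symm
    _ = ‖E * c' + c' * E - E * c' * E‖ := by rw [hfinal]
    _ ≤ ‖E * c' + c' * E‖ + ‖E * c' * E‖ := norm_sub_le _ _
    _ ≤ ‖E * c'‖ + ‖c' * E‖ + ‖E * c' * E‖ := by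
        gcongr
        exact norm_add_le _ _
    _ ≤ Real.sqrt (‖c‖ * δ) + Real.sqrt (‖c‖ * δ) + δ := by gcongr
    _ = 2 * Real.sqrt (‖c‖ * δ) + δ := by ring


lemma approx_gcg (H : NonUnitalStarSubalgebra ℂ C) {b c : C} (hbH : b ∈ closure (H : Set C))
    (hc : 0 ≤ c) (hcb : c ≤ b) {ε : ℝ} (hε : 0 < ε) :
    ∃ g : C, g ∈ closure (H : Set C) ∧ IsSelfAdjoint g ∧ ‖c - g * c * g‖ < ε := by
  have hb : 0 ≤ b := hc.trans hcb
  have hσ : ∀ x ∈ quasispectrum ℝ b, 0 ≤ x := fun x hx =>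
    quasispectrum_nonneg_of_nonneg b hb x hx
  set δ : ℝ := min (ε / 2) ((ε / 8) ^ 2 / (‖c‖ + 1)) with hδdef
  have hδ : 0 < δ := lt_min (by linarith) (by positivity)
  refine ⟨cfcₙ (fun t : ℝ => t / (t + δ)) b, ?_, cfcₙ_predicate _ b, ?_⟩
  · refine cfc_mem_closure H hbH (IsSelfAdjoint.of_nonneg hb) _ ?_ (by simp)
    apply ContinuousOn.div continuousOn_id (by fun_prop)
    intro x hx
    have := hσ x hx
    positivity
  · refine lt_of_le_of_lt (key_est c b hc hcb hδ) ?_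
    have hδ2 : δ ≤ ε / 2 := min_le_left _ _
    have hcδ : ‖c‖ * δ ≤ (ε / 8) ^ 2 := by
      have h1 : δ ≤ (ε / 8) ^ 2 / (‖c‖ + 1) := min_le_right _ _
      have h2 : ‖c‖ * δ ≤ ‖c‖ * ((ε / 8) ^ 2 / (‖c‖ + 1)) :=
        mul_le_mul_of_nonneg_left h1 (norm_nonneg c)
      have h3 : ‖c‖ * ((ε / 8) ^ 2 / (‖c‖ + 1)) ≤ (‖c‖ + 1) * ((ε / 8) ^ 2 / (‖c‖ + 1)) := by
        have : (0:ℝ) ≤ (ε / 8) ^ 2 / (‖c‖ + 1) := by positivity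
        nlinarith
      have h4 : (‖c‖ + 1) * ((ε / 8) ^ 2 / (‖c‖ + 1)) = (ε / 8) ^ 2 := by
        rw [mul_div_cancel₀]
        positivity
      linarith
    have hsqrt : Real.sqrt (‖c‖ * δ) ≤ ε / 8 := by
      have := Real.sqrt_le_sqrt hcδ
      rwa [Real.sqrt_sq (by positivity)] at this
    linarith

lemma mul_mem_closure (H : NonUnitalStarSubalgebra ℂ C)
    (hher : ∀ c h : C, h ∈ H → 0 ≤ c → c ≤ h → c ∈ H)
    {x y : C} (hx : x ∈ closure (H : Set C)) (hy : y ∈ closure (H : Set C)) (c : C) :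
    x * c * y ∈ closure (H : Set C) := by
  have hT : Continuous (fun p : C × C => p.1 * c * p.2) := by fun_prop
  have hmaps : Set.MapsTo (fun p : C × C => p.1 * c * p.2) ((H : Set C) ×ˢ (H : Set C))
      (H : Set C) := fun p hp => hmul_mem H hher hp.1 hp.2 c
  have h2 := hmaps.closure hT
  rw [closure_prod_eq] at h2
  exact h2 (show (x, y) ∈ closure (H : Set C) ×ˢ closure (H : Set C) from ⟨hx, hy⟩)


end Aux



/-- Let `ℋ` be a (not necessarily closed) *-subalgebra of a C*-algebra `C`
which is the span of its positive part `ℋ⁺ = ℋ ∩ C⁺`, with `ℋ⁺` a hereditary cone in `C`.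
Then (i) `ℋCℋ ⊆ ℋ`; (ii) with `D` the closure of `span ℋCℋ`, the set `(span ℋCℋ) ∩ C⁺`
is dense in `D⁺`; (iii) the closure of `ℋ` is a hereditary (closed *-sub)algebra of `C`. -/
theorem stmt5
    {C : Type*} [NonUnitalCStarAlgebra C] [PartialOrder C] [StarOrderedRing C]
    (H : NonUnitalStarSubalgebra ℂ C)
    (hspan : ∀ h ∈ H, h ∈ Submodule.span ℂ {c : C | c ∈ H ∧ 0 ≤ c})
    (hher : ∀ c h : C, h ∈ H → 0 ≤ c → c ≤ h → c ∈ H) :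
    (∀ h₁ ∈ H, ∀ h₂ ∈ H, ∀ c : C, h₁ * c * h₂ ∈ H) ∧
    (∀ d ∈ closure
        (Submodule.span ℂ {x : C | ∃ h₁ ∈ H, ∃ h₂ ∈ H, ∃ c : C, x = h₁ * c * h₂} : Set C),
      0 ≤ d →
      d ∈ closure
        ((Submodule.span ℂ {x : C | ∃ h₁ ∈ H, ∃ h₂ ∈ H, ∃ c : C, x = h₁ * c * h₂} : Set C) ∩
          {c : C | 0 ≤ c})) ∧
    ((∀ a ∈ closure (H : Set C), ∀ b ∈ closure (H : Set C),
        a + b ∈ closure (H : Set C) ∧ a * b ∈ closure (H : Set C) ∧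
        star a ∈ closure (H : Set C) ∧ ∀ z : ℂ, z • a ∈ closure (H : Set C)) ∧
      (∀ c b : C, b ∈ closure (H : Set C) → 0 ≤ c → c ≤ b → c ∈ closure (H : Set C))) := by
  have hSH : ((Submodule.span ℂ
      {x : C | ∃ h₁ ∈ H, ∃ h₂ ∈ H, ∃ c : C, x = h₁ * c * h₂} : Submodule ℂ C) : Set C) ⊆
      (H : Set C) := by
    have hle : (Submodule.span ℂ
        {x : C | ∃ h₁ ∈ H, ∃ h₂ ∈ H, ∃ c : C, x = h₁ * c * h₂} : Submodule ℂ C) ≤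
        H.toNonUnitalSubalgebra.toSubmodule := by
      rw [Submodule.span_le]
      rintro x ⟨h₁, hh₁, h₂, hh₂, c, rfl⟩
      exact hmul_mem H hher hh₁ hh₂ c
    exact fun x hx => hle hx
  have hered : ∀ c b : C, b ∈ closure (H : Set C) → 0 ≤ c → c ≤ b →
      c ∈ closure (H : Set C) := by
    intro c b hbH hc hcb
    have hc2 : c ∈ closure (closure (H : Set C)) := by
      rw [Metric.mem_closure_iff]
      intro ε hε
      obtain ⟨g, hgH, hgsa, hlt⟩ := approx_gcg H hbH hc hcb hε
      exact ⟨g * c * g, mul_mem_closure H hher hgH hgH c, by rwa [dist_eq_norm]⟩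
    rwa [closure_closure] at hc2
  refine ⟨fun h₁ hh₁ h₂ hh₂ c => hmul_mem H hher hh₁ hh₂ c, ?_, ?_, hered⟩
  · -- part (ii)
    intro d hd hd0
    have hdH : d ∈ closure (H : Set C) := closure_mono hSH hd
    rw [Metric.mem_closure_iff]
    intro ε hε
    obtain ⟨g, hgH, hgsa, hlt⟩ := approx_gcg H hdH hd0 le_rfl (half_pos hε)
    set K : ℝ := ‖d‖ * (2 * ‖g‖ + 1) + 1 with hKdef
    have hK : 0 < K := by positivity
    set η : ℝ := min 1 (ε / 2 / K) with hηdef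
    have hη : 0 < η := lt_min one_pos (by positivity)
    obtain ⟨h, hhH, hdist⟩ := Metric.mem_closure_iff.mp hgH η hη
    rw [dist_eq_norm] at hdist
    have hη1 : η ≤ 1 := min_le_left _ _
    have hhn : ‖h‖ ≤ ‖g‖ + 1 := by
      have h1 : ‖h‖ ≤ ‖g‖ + ‖g - h‖ :=
        calc ‖h‖ = ‖g - (g - h)‖ := by rw [sub_sub_cancel]
          _ ≤ ‖g‖ + ‖g - h‖ := norm_sub_le _ _
      linarith
    have hgg : g * d * g = star g * d * g := by rw [hgsa.star_eq]
    have hidE : star g * d * g - star h * d * h =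
        star (g - h) * d * g + star h * d * (g - h) := by
      rw [star_sub]; noncomm_ring
    have hb1 : ‖star (g - h) * d * g‖ ≤ ‖g - h‖ * ‖d‖ * ‖g‖ :=
      calc ‖star (g - h) * d * g‖ ≤ ‖star (g - h) * d‖ * ‖g‖ := norm_mul_le _ _
        _ ≤ ‖star (g - h)‖ * ‖d‖ * ‖g‖ := by gcongr; exact norm_mul_le _ _
        _ = ‖g - h‖ * ‖d‖ * ‖g‖ := by rw [norm_star]
    have hb2 : ‖star h * d * (g - h)‖ ≤ ‖h‖ * ‖d‖ * ‖g - h‖ :=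
      calc ‖star h * d * (g - h)‖ ≤ ‖star h * d‖ * ‖g - h‖ := norm_mul_le _ _
        _ ≤ ‖star h‖ * ‖d‖ * ‖g - h‖ := by gcongr; exact norm_mul_le _ _
        _ = ‖h‖ * ‖d‖ * ‖g - h‖ := by rw [norm_star]
    have hdiff : ‖g * d * g - star h * d * h‖ < ε / 2 := by
      have t1 : ‖star g * d * g - star h * d * h‖ ≤
          ‖g - h‖ * ‖d‖ * ‖g‖ + ‖h‖ * ‖d‖ * ‖g - h‖ := by
        rw [hidE]; exact (norm_add_le _ _).trans (add_le_add hb1 hb2)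
      have t2 : ‖g - h‖ * ‖d‖ * ‖g‖ + ‖h‖ * ‖d‖ * ‖g - h‖ ≤ ‖g - h‖ * K := by
        rw [hKdef]
        nlinarith [mul_le_mul_of_nonneg_right hhn (mul_nonneg (norm_nonneg d)
            (norm_nonneg (g - h))), norm_nonneg (g - h), norm_nonneg d, norm_nonneg g,
          mul_nonneg (mul_nonneg (norm_nonneg (g - h)) (norm_nonneg d)) (norm_nonneg g),
          mul_nonneg (norm_nonneg (g - h)) (norm_nonneg d)]
      have t3 : ‖g - h‖ * K < η * K := mul_lt_mul_of_pos_right hdist hK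
      have t4 : η * K ≤ ε / 2 := by
        have h5 : η ≤ ε / 2 / K := min_le_right _ _
        calc η * K ≤ ε / 2 / K * K := mul_le_mul_of_nonneg_right h5 hK.le
          _ = ε / 2 := div_mul_cancel₀ _ hK.ne'
      rw [hgg]
      clear_value K η
      linarith
    refine ⟨star h * d * h,
      ⟨Submodule.subset_span ⟨star h, star_mem hhH, h, hhH, d, rfl⟩,
        star_left_conjugate_nonneg hd0 h⟩, ?_⟩
    rw [dist_eq_norm]
    calc ‖d - star h * d * h‖
        = ‖(d - g * d * g) + (g * d * g - star h * d * h)‖ := by rw [sub_add_sub_cancel]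
      _ ≤ ‖d - g * d * g‖ + ‖g * d * g - star h * d * h‖ := norm_add_le _ _
      _ < ε / 2 + ε / 2 := add_lt_add hlt hdiff
      _ = ε := add_halves ε
  · -- part (iii) subalgebra
    intro a ha b hb
    let B := H.topologicalClosure
    exact ⟨B.add_mem' ha hb, B.mul_mem' ha hb, B.star_mem' ha, fun z => B.smul_mem' z ha⟩
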